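/- If a finite word w is dominant, then w is extremal and irreducible. -/

import Mathlib

/-- The set `Σ` of infinite paths in the graph with edge relation `E`. -/
def InSigma (E : ℕ → ℕ → Prop) (a : ℕ → ℕ) : Prop :=
  ∀ n : ℕ, E (a n) (a (n + 1))

/-- The shift map `σ`. -/
def shiftSeq (a : ℕ → ℕ) : ℕ → ℕ := fun n => a (n + 1)

/-- The linear order on infinite sequences determined by the sign function `O`:
`a < b` iff they first differ at position `n` and `(∏_{k<n} O(a k)) * (a n - b n) < 0`. -/
def SeqLt (O : ℕ → ℤ) (a b : ℕ → ℕ) : Prop :=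
  ∃ n : ℕ, (∀ k < n, a k = b k) ∧
    (∏ k ∈ Finset.range n, O (a k)) * ((a n : ℤ) - (b n : ℤ)) < 0

def SeqLe (O : ℕ → ℤ) (a b : ℕ → ℕ) : Prop :=
  SeqLt O a b ∨ a = b

/-- An element of `Σ` is admissible if it starts with `N` and all its shifts are `≤` itself. -/
def AdmissibleSeq (E : ℕ → ℕ → Prop) (O : ℕ → ℤ) (N : ℕ) (a : ℕ → ℕ) : Prop :=
  InSigma E a ∧ a 0 = N ∧ ∀ n : ℕ, SeqLe O (shiftSeq^[n] a) a

/-- `w^∞`, the periodic sequence repeating the finite word `w`. -/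
def perSeq (w : List ℕ) : ℕ → ℕ := fun n => w.getD (n % w.length) 0

/-- The infinite sequence starting with the word `w` followed by the sequence `s`. -/
def wordThen (w : List ℕ) (s : ℕ → ℕ) : ℕ → ℕ :=
  fun n => if n < w.length then w.getD n 0 else s (n - w.length)

/-- `sgn(w) = ∏_k O(w_k)`. -/
def wordSgn (O : ℕ → ℤ) (w : List ℕ) : ℤ := (w.map O).prod

/-- The partial order on finite words determined by `O`. -/
def WordLt (O : ℕ → ℤ) (u v : List ℕ) : Prop :=
  ∃ j : ℕ, j < min u.length v.length ∧ (∀ k < j, u.getD k 0 = v.getD k 0) ∧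
    (∏ k ∈ Finset.range j, O (u.getD k 0)) * ((u.getD j 0 : ℤ) - (v.getD j 0 : ℤ)) < 0

/-- A finite word is periodic if `w^∞ ∈ Σ` and `w` starts with the letter `N`. -/
def PeriodicWord (E : ℕ → ℕ → Prop) (N : ℕ) (w : List ℕ) : Prop :=
  w ≠ [] ∧ InSigma E (perSeq w) ∧ w.getD 0 0 = N

/-- A finite word is irreducible if it is not a concatenation of two or more copies
of a shorter word. -/
def IrreducibleWord (w : List ℕ) : Prop :=
  ∀ (u : List ℕ) (k : ℕ), 2 ≤ k → w ≠ (List.replicate k u).flatten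

/-- A finite word is extremal if it is periodic and `w^∞` is admissible. -/
def ExtremalWord (E : ℕ → ℕ → Prop) (O : ℕ → ℤ) (N : ℕ) (w : List ℕ) : Prop :=
  PeriodicWord E N w ∧ AdmissibleSeq E O N (perSeq w)

/-- A finite word is admissible if it is extremal and has sign `1`. -/
def AdmissibleWord (E : ℕ → ℕ → Prop) (O : ℕ → ℤ) (N : ℕ) (w : List ℕ) : Prop :=
  ExtremalWord E O N w ∧ wordSgn O w = 1

/-- A finite word `w` is dominant if it is periodic and `Suff_k(wN) < Pre_k(w)`
for all `2 ≤ k ≤ |w|`. -/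
def DominantWord (E : ℕ → ℕ → Prop) (O : ℕ → ℤ) (N : ℕ) (w : List ℕ) : Prop :=
  PeriodicWord E N w ∧ ∀ k : ℕ, 2 ≤ k → k ≤ w.length →
    WordLt O ((w ++ [N]).drop (w.length + 1 - k)) (w.take k)

/-- `a' = Next(a)`: `a'` is the immediate successor of `a` among periodic words
of the same length. Equivalently, `a = Prev(a')`. -/
def IsNext (E : ℕ → ℕ → Prop) (O : ℕ → ℤ) (N : ℕ) (a a' : List ℕ) : Prop :=
  PeriodicWord E N a ∧ PeriodicWord E N a' ∧ a.length = a'.length ∧ WordLt O a a' ∧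
    ∀ u : List ℕ, PeriodicWord E N u → u.length = a.length →
      ¬(WordLt O a u ∧ WordLt O u a')

/-- `(a, a')` is a tuning pair: `a` admissible, `a'` extremal of sign `-1`, `a' = Next(a)`. -/
def TuningPair (E : ℕ → ℕ → Prop) (O : ℕ → ℤ) (N : ℕ) (a a' : List ℕ) : Prop :=
  AdmissibleWord E O N a ∧ ExtremalWord E O N a' ∧ wordSgn O a' = -1 ∧ IsNext E O N a a'

/-- Condition (1) of tunability for the word `wmin`. -/
def MinWord (E : ℕ → ℕ → Prop) (O : ℕ → ℤ) (N : ℕ) (wmin : List ℕ) : Prop :=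
  PeriodicWord E N wmin ∧ wmin.count N = 1 ∧ wordSgn O wmin = -1 ∧
    PeriodicWord E N (wmin ++ [N]) ∧
    ∀ u : List ℕ, PeriodicWord E N u → u.length = wmin.length + 1 →
      u = wmin ++ [N] ∨ WordLt O (wmin ++ [N]) u

/-- `(Γ, O)` is tunable with minimal word `wmin`. -/
def Tunable (E : ℕ → ℕ → Prop) (O : ℕ → ℤ) (N : ℕ) (wmin : List ℕ) : Prop :=
  MinWord E O N wmin ∧
    ∀ a : List ℕ, ExtremalWord E O N a → IrreducibleWord a → wordSgn O a = -1 →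
      (∃ k : ℕ, Odd k ∧ a = (List.replicate k wmin).flatten) ∨
        ∃ a' : List ℕ, TuningPair E O N a' a

/-- The edge relation of `Γ₂`, the complete directed graph on `{0, 1}`. -/
def E2 : ℕ → ℕ → Prop := fun i j => i ≤ 1 ∧ j ≤ 1

/-- The sign function `O₂` of the binary setting: `O₂ 0 = 1`, `O₂ 1 = -1`. -/
def O2 : ℕ → ℤ := fun k => if k = 0 then 1 else -1

/-- The tuning `w * v` of a tuning pair `(w, w')` by a finite binary word `v`. -/
def tuningWord (w w' : List ℕ) (v : List ℕ) : List ℕ :=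
  (v.map fun i => if i = 0 then w else w').flatten

/-- The tuning `w * v` of a tuning pair `(w, w')` by an infinite binary sequence `v`. -/
def tuningSeq (w w' : List ℕ) (v : ℕ → ℕ) : ℕ → ℕ :=
  fun n => (if v (n / w.length) = 0 then w else w').getD (n % w.length) 0

/-- A word can be written as a tuning `a * v` with `|v| > 1`. -/
def IsTuning (E : ℕ → ℕ → Prop) (O : ℕ → ℤ) (N : ℕ) (x : List ℕ) : Prop :=
  ∃ (a a' v : List ℕ), TuningPair E O N a a' ∧ AdmissibleWord E2 O2 1 v ∧
    1 < v.length ∧ x = tuningWord a a' v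

/-- An admissible word is nonrenormalizable if it cannot be written as a tuning. -/
def Nonrenormalizable (E : ℕ → ℕ → Prop) (O : ℕ → ℤ) (N : ℕ) (w : List ℕ) : Prop :=
  AdmissibleWord E O N w ∧ ¬ IsTuning E O N w

/-- `PS(w)`: the set of common proper prefixes/suffixes `v` of `w` with `w = yv = vz`, `z₀ = N`. -/
def PS (N : ℕ) (w : List ℕ) : Set (List ℕ) :=
  {v | 0 < v.length ∧ v.length < w.length ∧ (∃ y, w = y ++ v) ∧
    ∃ z, w = v ++ z ∧ z.getD 0 0 = N}

/-- `RS(w)`: the set of words `z` with `w = vz` for some `v ∈ PS(w)`. -/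
def RS (N : ℕ) (w : List ℕ) : Set (List ℕ) :=
  {z | ∃ v ∈ PS N w, w = v ++ z}

/-- There is a walk of length `n` from `i` to `j` in the graph `E`. -/
def HasWalk (E : ℕ → ℕ → Prop) (i j n : ℕ) : Prop :=
  ∃ a : ℕ → ℕ, a 0 = i ∧ a n = j ∧ ∀ k < n, E (a k) (a (k + 1))

/-- The standing assumptions on `(Γ, O)`: vertex set `{0, …, N}`, `O` takes values in `{±1}`,
and the graph is strongly connected and aperiodic (equivalently, primitive). -/
def GoodGraph (E : ℕ → ℕ → Prop) (O : ℕ → ℤ) (N : ℕ) : Prop :=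
  (∀ i j, E i j → i ≤ N ∧ j ≤ N) ∧
  (∀ i, i ≤ N → O i = 1 ∨ O i = -1) ∧
  (∃ m : ℕ, 0 < m ∧ ∀ i j, i ≤ N → j ≤ N → HasWalk E i j m)

section Aux

lemma getD_drop' (l : List ℕ) (n i d : ℕ) : (l.drop n).getD i d = l.getD (n + i) d := by
  simp [List.getD_eq_getElem?_getD, List.getElem?_drop]

lemma getD_take' (l : List ℕ) (k i d : ℕ) (h : i < k) : (l.take k).getD i d = l.getD i d := by
  simp [List.getD_eq_getElem?_getD, List.getElem?_take, h]

lemma shiftSeq_iter (n : ℕ) : ∀ (a : ℕ → ℕ) (m : ℕ), shiftSeq^[n] a m = a (m + n) := by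
  induction n with
  | zero => intro a m; simp
  | succ n ih =>
      intro a m
      rw [Function.iterate_succ_apply, ih (shiftSeq a) m]
      simp [shiftSeq]; ring_nf

lemma perSeq_add_mod (w : List ℕ) (m n : ℕ) :
    perSeq w (m + n) = perSeq w (m + n % w.length) := by
  unfold perSeq
  congr 1
  conv_lhs => rw [Nat.add_mod]
  conv_rhs => rw [Nat.add_mod, Nat.mod_mod_of_dvd _ dvd_rfl]

/-- Key lemma: if `w` is dominant and `1 ≤ r < |w|`, then the shift of `w^∞` by `r`
is strictly smaller than `w^∞`. -/
lemma dominant_shift_lt (E : ℕ → ℕ → Prop) (O : ℕ → ℤ) (N : ℕ) (w : List ℕ)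
    (hw : DominantWord E O N w) (r : ℕ) (hr1 : 1 ≤ r) (hr2 : r < w.length) :
    SeqLt O (fun m => perSeq w (m + r)) (perSeq w) := by
  set L := w.length with hL
  have hN : w.getD 0 0 = N := hw.1.2.2
  have h := hw.2 (L + 1 - r) (by omega) (by omega)
  rw [show w.length + 1 - (L + 1 - r) = r by omega] at h
  obtain ⟨j, hj, hagree, hlt⟩ := h
  have hjk : j < L + 1 - r := by
    have h1 := lt_of_lt_of_le hj (min_le_left _ _)
    rw [List.length_drop, List.length_append] at h1
    simpa using h1
  -- values of the dropped word
  have fact1 : ∀ i, i ≤ L - r → ((w ++ [N]).drop r).getD i 0 = perSeq w (i + r) := by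
    intro i hi
    rw [getD_drop']
    rcases lt_or_eq_of_le (show r + i ≤ L by omega) with hlt' | heq
    · rw [List.getD_eq_getElem?_getD, List.getElem?_append_left (by simpa using hlt'),
        ← List.getD_eq_getElem?_getD]
      unfold perSeq
      rw [Nat.mod_eq_of_lt (by omega : i + r < w.length)]
      congr 1; omega
    · have : (w ++ [N]).getD (r + i) 0 = N := by
        rw [heq]
        simp [List.getD_eq_getElem?_getD, hL]
      rw [this]
      unfold perSeq
      rw [show i + r = L by omega, Nat.mod_self]
      exact hN.symm
  have fact2 : ∀ i, i < L + 1 - r → (w.take (L + 1 - r)).getD i 0 = perSeq w i := by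
    intro i hi
    rw [getD_take' _ _ _ _ hi]
    unfold perSeq
    rw [Nat.mod_eq_of_lt (by omega)]
  refine ⟨j, ?_, ?_⟩
  · intro k hk
    have e1 := fact1 k (by omega)
    have e2 := fact2 k (by omega)
    have e3 := hagree k hk
    simp only [e1, e2] at e3
    exact e3
  · have eprod : ∀ k ∈ Finset.range j, O (((w ++ [N]).drop r).getD k 0) = O (perSeq w (k + r)) := by
      intro k hk
      rw [fact1 k (by simp at hk; omega)]
    rw [Finset.prod_congr rfl eprod, fact1 j (by omega), fact2 j hjk] at hlt
    exact hlt

lemma flatten_replicate_getD (u : List ℕ) : ∀ (k i : ℕ), i < k * u.length →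
    ((List.replicate k u).flatten).getD i 0 = u.getD (i % u.length) 0 := by
  intro k
  induction k with
  | zero => intro i hi; omega
  | succ k ih =>
      intro i hi
      have hu : 0 < u.length := by by_contra h; simp at h; simp [h] at hi
      rw [List.replicate_succ, List.flatten_cons]
      rcases lt_or_ge i u.length with h | h
      · rw [List.getD_eq_getElem?_getD, List.getElem?_append_left h,
          ← List.getD_eq_getElem?_getD, Nat.mod_eq_of_lt h]
      · rw [List.getD_eq_getElem?_getD, List.getElem?_append_right h,
          ← List.getD_eq_getElem?_getD, ih (i - u.length) (by rw [add_mul, one_mul] at hi; omega)]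
        congr 1
        conv_rhs => rw [show i = (i - u.length) + u.length by omega]
        rw [Nat.add_mod_right]

end Aux

/-- A dominant word is extremal and irreducible. -/
theorem statement1 (E : ℕ → ℕ → Prop) (O : ℕ → ℤ) (N : ℕ) (hG : GoodGraph E O N)
    (w : List ℕ) (hw : DominantWord E O N w) :
    ExtremalWord E O N w ∧ IrreducibleWord w := by
  obtain ⟨hne, hsig, hN⟩ := hw.1
  have hL : 0 < w.length := List.length_pos_iff.mpr hne
  have ha0 : perSeq w 0 = N := by unfold perSeq; rw [Nat.zero_mod]; exact hN
  have hshift : ∀ n : ℕ, shiftSeq^[n] (perSeq w) = fun m => perSeq w (m + n % w.length) := by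
    intro n; funext m
    rw [shiftSeq_iter]
    exact perSeq_add_mod w m n
  have hadm : ∀ n : ℕ, SeqLe O (shiftSeq^[n] (perSeq w)) (perSeq w) := by
    intro n
    rcases Nat.eq_zero_or_pos (n % w.length) with h0 | hpos
    · right; rw [hshift n, h0]; funext m; rw [Nat.add_zero]
    · left; rw [hshift n]
      exact dominant_shift_lt E O N w hw _ hpos (Nat.mod_lt _ hL)
  refine ⟨⟨⟨hne, hsig, hN⟩, hsig, ha0, hadm⟩, ?_⟩
  intro u k hk heq
  have hune : u ≠ [] := by
    rintro rfl; simp at heq; exact hne heq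
  have hul : 0 < u.length := List.length_pos_iff.mpr hune
  have hwl : w.length = k * u.length := by
    rw [heq]; simp [List.length_flatten, List.map_replicate, List.sum_replicate]
  have hrlt : u.length < w.length := by
    calc u.length < 2 * u.length := by omega
    _ ≤ k * u.length := Nat.mul_le_mul_right _ hk
    _ = w.length := hwl.symm
  have hkey : ∀ x : ℕ, perSeq w x = u.getD (x % u.length) 0 := by
    intro x
    unfold perSeq
    have h1 : w.getD (x % w.length) 0 = (List.replicate k u).flatten.getD (x % w.length) 0 := by
      rw [← heq]
    rw [h1, flatten_replicate_getD u k (x % w.length) (by rw [← hwl]; exact Nat.mod_lt _ hL),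
      Nat.mod_mod_of_dvd _ ⟨k, by rw [hwl]; ring⟩]
  obtain ⟨n, -, hlt⟩ := dominant_shift_lt E O N w hw u.length hul hrlt
  simp only at hlt
  rw [hkey (n + u.length), hkey n, Nat.add_mod_right] at hlt
  simp at hlt
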